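/- Let X and Y be complex Banach spaces. Suppose there exists a bounded linear operator ℛ : L²(𝕋, X) → L²(𝕋, X) such that for every φ ∈ L²(𝕋, X) and every k ∈ ℤ, the Fourier coefficient (ℛφ)^(k) equals φ̂(k) if k ≥ 0 and equals 0 if k < 0. Let V : X → Y be a compact linear operator. Then there exists a function η : [0,∞) → [0,∞) with lim_{δ→0} η(δ) = η(0) = 0 such that ‖V∘(φ − ℛφ)‖_{L²(𝕋,Y)} ≤ η(‖V∘φ‖_{L²(𝕋,Y)}) for all φ ∈ L²(𝕋, X) with ‖φ‖_{L²(𝕋,X)} ≤ 2, where V∘ψ denotes the pointwise composition t ↦ V(ψ(t)). -/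

import Mathlib

open MeasureTheory Filter Topology
open scoped ENNReal

/-- Normalized Lebesgue measure `dt/2π` on `[0, 2π)`, modelling the unit circle `𝕋`. -/
noncomputable def circleMeas : Measure ℝ :=
  (ENNReal.ofReal (2 * Real.pi))⁻¹ • (volume.restrict (Set.Ioc (0:ℝ) (2 * Real.pi)))

/-- The `k`-th Fourier coefficient `φ̂(k) = ∫₀^{2π} φ(e^{it}) e^{-ikt} dt/2π` of
`φ ∈ L²(𝕋, X)`. -/
noncomputable def fourierCoefL2 {X : Type*} [NormedAddCommGroup X] [NormedSpace ℂ X]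
    (φ : Lp X 2 circleMeas) (k : ℤ) : X :=
  ∫ t, Complex.exp (-(Complex.I * k * t)) • φ t ∂circleMeas

instance : IsProbabilityMeasure circleMeas := by
  constructor
  rw [circleMeas]
  rw [Measure.smul_apply, Measure.restrict_apply MeasurableSet.univ, Set.univ_inter,
    Real.volume_Ioc]
  rw [smul_eq_mul, sub_zero]
  exact ENNReal.inv_mul_cancel (by positivity) ENNReal.ofReal_ne_top

lemma twopi_pos : (0:ℝ) < 2 * Real.pi := by positivity

lemma map_circleMeas :
    Measure.map ((↑) : ℝ → AddCircle (2*Real.pi)) circleMeas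
      = @AddCircle.haarAddCircle (2*Real.pi) ⟨twopi_pos⟩ := by
  haveI : Fact (0 < 2*Real.pi) := ⟨twopi_pos⟩
  have h := AddCircle.measurePreserving_mk (2*Real.pi) 0
  rw [circleMeas, Measure.map_smul]
  rw [show Set.Ioc (0:ℝ) (2*Real.pi) = Set.Ioc 0 (0 + 2*Real.pi) by rw [zero_add]]
  rw [h.map_eq, AddCircle.volume_eq_smul_haarAddCircle, smul_smul,
    ENNReal.inv_mul_cancel (by positivity) ENNReal.ofReal_ne_top, one_smul]

lemma ae_mem_Ioc : ∀ᵐ t ∂circleMeas, t ∈ Set.Ioc (0:ℝ) (2*Real.pi) := by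
  rw [ae_iff]
  have h : circleMeas (Set.Ioc (0:ℝ) (2*Real.pi))ᶜ = 0 := by
    rw [circleMeas, Measure.smul_apply, Measure.restrict_apply measurableSet_Ioc.compl,
      Set.compl_inter_self, measure_empty, smul_zero]
  exact measure_mono_null (fun x hx => hx) h

lemma parseval_circle (f : Lp ℂ 2 circleMeas) :
    Summable (fun k : ℤ => ‖fourierCoefL2 f k‖^2) ∧
    ∫ t, ‖f t‖^2 ∂circleMeas = ∑' k : ℤ, ‖fourierCoefL2 f k‖^2 := by
  haveI : Fact (0 < 2*Real.pi) := ⟨twopi_pos⟩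
  set T := 2*Real.pi with hT
  have hg : StronglyMeasurable (f : ℝ → ℂ) := Lp.stronglyMeasurable f
  set H : AddCircle T → ℂ := AddCircle.liftIoc T 0 (f : ℝ → ℂ) with hHdef
  have hHm : StronglyMeasurable H := by
    have hm : Measurable (fun x : AddCircle T => ((AddCircle.measurableEquivIoc T 0) x : ℝ)) :=
      measurable_subtype_coe.comp (AddCircle.measurableEquivIoc T 0).measurable
    exact hg.comp_measurable hm
  have haecirc : ∀ᵐ t : ℝ ∂circleMeas, H (↑t : AddCircle T) = f t := by
    filter_upwards [ae_mem_Ioc] with t ht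
    exact AddCircle.liftIoc_coe_apply (by rwa [zero_add])
  have hmap := map_circleMeas
  have hHae : AEStronglyMeasurable H (@AddCircle.haarAddCircle T _) := hHm.aestronglyMeasurable
  have hmk : AEMeasurable ((↑) : ℝ → AddCircle T) circleMeas :=
    AddCircle.measurable_mk'.aemeasurable
  have hcomp : eLpNorm H 2 (@AddCircle.haarAddCircle T _) = eLpNorm f 2 circleMeas := by
    rw [← hmap, eLpNorm_map_measure (hmap ▸ hHae) hmk]
    exact eLpNorm_congr_ae haecirc
  have hmem : MemLp H 2 (@AddCircle.haarAddCircle T _) :=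
    ⟨hHae, by rw [hcomp]; exact Lp.eLpNorm_lt_top f⟩
  set FL : Lp ℂ 2 (@AddCircle.haarAddCircle T _) := hmem.toLp H with hFL
  have hFLae : (FL : AddCircle T → ℂ) =ᵐ[@AddCircle.haarAddCircle T _] H := hmem.coeFn_toLp
  -- coefficients agree
  have hcoef : ∀ k : ℤ, fourierCoeff (FL : AddCircle T → ℂ) k = fourierCoefL2 f k := by
    intro k
    rw [fourierCoeff]
    rw [integral_congr_ae (by filter_upwards [hFLae] with x hx; rw [hx] :
      (fun x : AddCircle T => fourier (-k) x • (FL : AddCircle T → ℂ) x)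
        =ᵐ[@AddCircle.haarAddCircle T _] fun x => fourier (-k) x • H x)]
    rw [← hmap, integral_map hmk]
    · rw [fourierCoefL2]
      apply integral_congr_ae
      filter_upwards [haecirc] with t ht
      rw [ht, fourier_coe_apply]
      congr 1
      have hπ : (Real.pi : ℂ) ≠ 0 := Complex.ofReal_ne_zero.mpr Real.pi_ne_zero
      rw [hT]
      push_cast
      congr 1
      rw [div_eq_iff (mul_ne_zero two_ne_zero hπ)]
      ring
    · rw [hmap]
      exact (((fourier (-k)).continuous).aestronglyMeasurable).smul hHae
  -- norm integrals agree
  have hnorm : ∫ x, ‖(FL : AddCircle T → ℂ) x‖^2 ∂(@AddCircle.haarAddCircle T _)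
      = ∫ t, ‖f t‖^2 ∂circleMeas := by
    rw [integral_congr_ae (by filter_upwards [hFLae] with x hx; rw [hx] :
      (fun x : AddCircle T => ‖(FL : AddCircle T → ℂ) x‖^2)
        =ᵐ[@AddCircle.haarAddCircle T _] fun x => ‖H x‖^2)]
    rw [← hmap, integral_map hmk (by rw [hmap]; exact (hHae.norm.pow 2))]
    apply integral_congr_ae
    filter_upwards [haecirc] with t ht
    rw [ht]
  have hparseval := tsum_sq_fourierCoeff FL
  constructor
  · have hsum : Summable (fun i : ℤ => ‖fourierBasis.repr FL i‖ ^ (2:ℝ)) := by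
      have := lp.memℓp (fourierBasis.repr FL)
      rw [memℓp_gen_iff (by norm_num : 0 < (2:ℝ≥0∞).toReal)] at this
      simpa using this
    have : Summable (fun i : ℤ => ‖fourierCoeff (FL : AddCircle T → ℂ) i‖ ^ 2) := by
      apply Summable.congr hsum
      intro i
      rw [← fourierBasis_repr]
      rw [← Real.rpow_natCast ‖fourierBasis.repr FL i‖ 2]
      norm_num
    exact this.congr fun k => by rw [hcoef k]
  · rw [← hnorm, ← hparseval]
    exact tsum_congr fun k => by rw [hcoef k]

lemma integrable_norm_sq {E : Type*} [NormedAddCommGroup E] (f : Lp E 2 circleMeas) :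
    Integrable (fun t => ‖f t‖^2) circleMeas := by
  have h := (Lp.memLp f).integrable_norm_rpow two_ne_zero ENNReal.ofNat_ne_top
  rw [ENNReal.toReal_ofNat] at h
  apply h.congr
  filter_upwards with t
  rw [← Real.rpow_natCast ‖f t‖ 2]
  norm_num

lemma norm_eq_sqrt_integral {E : Type*} [NormedAddCommGroup E] (f : Lp E 2 circleMeas) :
    ‖f‖ = Real.sqrt (∫ t, ‖f t‖^2 ∂circleMeas) := by
  rw [Lp.norm_def, (Lp.memLp f).eLpNorm_eq_integral_rpow_norm two_ne_zero ENNReal.ofNat_ne_top]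
  rw [ENNReal.toReal_ofReal (by positivity), ENNReal.toReal_ofNat]
  rw [Real.sqrt_eq_rpow]
  norm_num

lemma integral_norm_sq_eq {E : Type*} [NormedAddCommGroup E] (f : Lp E 2 circleMeas) :
    ∫ t, ‖f t‖^2 ∂circleMeas = ‖f‖^2 := by
  rw [norm_eq_sqrt_integral, Real.sq_sqrt]
  positivity

lemma exp_norm_one (k : ℤ) (t : ℝ) : ‖Complex.exp (-(Complex.I * k * t))‖ = 1 := by
  rw [Complex.norm_exp]
  simp

lemma integrable_exp_smul {X : Type*} [NormedAddCommGroup X] [NormedSpace ℂ X]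
    (φ : Lp X 2 circleMeas) (k : ℤ) :
    Integrable (fun t : ℝ => Complex.exp (-(Complex.I * k * t)) • φ t) circleMeas := by
  have h1 : Integrable (fun t => φ t) circleMeas :=
    memLp_one_iff_integrable.mp ((Lp.memLp φ).mono_exponent (by norm_num))
  refine h1.norm.mono' ?_ ?_
  · exact (Complex.continuous_exp.comp (by fun_prop)).aestronglyMeasurable.smul
      (Lp.aestronglyMeasurable φ)
  · filter_upwards with t
    rw [norm_smul, exp_norm_one, one_mul]

lemma fourierCoefL2_compLp {X Z : Type*} [NormedAddCommGroup X] [NormedSpace ℂ X]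
    [CompleteSpace X] [NormedAddCommGroup Z] [NormedSpace ℂ Z] [CompleteSpace Z]
    (W : X →L[ℂ] Z) (φ : Lp X 2 circleMeas) (k : ℤ) :
    fourierCoefL2 (W.compLp φ) k = W (fourierCoefL2 φ k) := by
  rw [fourierCoefL2, fourierCoefL2, ← W.integral_comp_comm (integrable_exp_smul φ k)]
  apply integral_congr_ae
  filter_upwards [W.coeFn_compLp φ] with t ht
  rw [ht]
  exact (W.map_smul _ _).symm

lemma fourierCoefL2_sub {X : Type*} [NormedAddCommGroup X] [NormedSpace ℂ X]
    [CompleteSpace X] (φ ψ : Lp X 2 circleMeas) (k : ℤ) :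
    fourierCoefL2 (φ - ψ) k = fourierCoefL2 φ k - fourierCoefL2 ψ k := by
  rw [fourierCoefL2, fourierCoefL2, fourierCoefL2,
    ← integral_sub (integrable_exp_smul φ k) (integrable_exp_smul ψ k)]
  apply integral_congr_ae
  filter_upwards [Lp.coeFn_sub φ ψ] with t ht
  rw [ht, Pi.sub_apply, smul_sub]

lemma riesz_scalar {X : Type*} [NormedAddCommGroup X] [NormedSpace ℂ X] [CompleteSpace X]
    (R : Lp X 2 circleMeas →L[ℂ] Lp X 2 circleMeas)
    (hR : ∀ (φ : Lp X 2 circleMeas) (k : ℤ),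
      fourierCoefL2 (R φ) k = if 0 ≤ k then fourierCoefL2 φ k else 0)
    (W : X →L[ℂ] ℂ) (φ : Lp X 2 circleMeas) :
    ∫ t, ‖(W.compLp φ - W.compLp (R φ) : Lp ℂ 2 circleMeas) t‖^2 ∂circleMeas
      ≤ ∫ t, ‖W.compLp φ t‖^2 ∂circleMeas := by
  set g := W.compLp φ with hgdef
  set h : Lp ℂ 2 circleMeas := W.compLp φ - W.compLp (R φ) with hhdef
  have hcoef : ∀ k, fourierCoefL2 h k = if 0 ≤ k then 0 else fourierCoefL2 g k := by
    intro k
    rw [hhdef, fourierCoefL2_sub, fourierCoefL2_compLp, fourierCoefL2_compLp, hR]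
    by_cases hk : 0 ≤ k <;> simp [hk, hgdef, fourierCoefL2_compLp]
  obtain ⟨hsumg, hg⟩ := parseval_circle g
  obtain ⟨hsumh, hh⟩ := parseval_circle h
  rw [hg, hh]
  apply Summable.tsum_le_tsum _ hsumh hsumg
  intro k
  rw [hcoef k]
  split_ifs with hk
  · have h0 : ‖(0:ℂ)‖^2 = 0 := by simp
    rw [h0]
    positivity
  · exact le_refl _

lemma compact_dual_bound {X Y : Type*} [NormedAddCommGroup X] [NormedSpace ℂ X]
    [NormedAddCommGroup Y] [NormedSpace ℂ Y] [CompleteSpace Y]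
    (V : X →L[ℂ] Y) (hV : IsCompactOperator V) {ε : ℝ} (hε : 0 < ε) :
    ∃ (C : Finset Y) (w : Y → (Y →L[ℂ] ℂ)), (∀ y, ‖w y‖ ≤ 1) ∧
      ∀ x : X, ‖V x‖ ≤ (∑ y ∈ C, ‖w y (V x)‖) + ε * ‖x‖ := by
  have hw : ∀ y : Y, ∃ w : Y →L[ℂ] ℂ, ‖w‖ ≤ 1 ∧ w y = ‖y‖ := fun y =>
    exists_dual_vector'' ℂ y
  choose w hw1 hw2 using hw
  have hK : IsCompact (closure (V '' Metric.closedBall 0 1)) :=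
    hV.isCompact_closure_image_closedBall 1
  obtain ⟨s, hs_sub, hs_fin, hcover⟩ := hK.finite_cover_balls (e := ε/3) (by positivity)
  refine ⟨hs_fin.toFinset, w, hw1, ?_⟩
  -- first for unit vectors
  have key : ∀ x : X, ‖x‖ ≤ 1 → ‖V x‖ ≤ (∑ y ∈ hs_fin.toFinset, ‖w y (V x)‖) + 2 * (ε/3) := by
    intro x hx
    have hmem : V x ∈ closure (V '' Metric.closedBall 0 1) :=
      subset_closure ⟨x, by simpa [Metric.mem_closedBall, dist_eq_norm] using hx, rfl⟩
    obtain ⟨y, hyS, hyb⟩ : ∃ y ∈ s, V x ∈ Metric.ball y (ε/3) := by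
      have := hcover hmem
      simpa using this
    have hdist : ‖V x - y‖ < ε/3 := by
      rw [← dist_eq_norm]; exact Metric.mem_ball.mp hyb
    have h1 : ‖V x‖ ≤ ‖y‖ + ε/3 := by
      have he : y + (V x - y) = V x := by abel
      calc ‖V x‖ = ‖y + (V x - y)‖ := by rw [he]
        _ ≤ ‖y‖ + ‖V x - y‖ := norm_add_le _ _
        _ ≤ ‖y‖ + ε/3 := by linarith
    have h2 : ‖y‖ ≤ ‖w y (V x)‖ + ε/3 := by
      have : (‖y‖:ℝ) = ‖w y y‖ := by rw [hw2]; simp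
      rw [this]
      have h4 : ‖y - V x‖ ≤ ε/3 := by rw [norm_sub_rev]; exact hdist.le
      have he2 : V x + (y - V x) = y := by abel
      calc ‖w y y‖ = ‖w y (V x) + w y (y - V x)‖ := by rw [← map_add, he2]
        _ ≤ ‖w y (V x)‖ + ‖w y (y - V x)‖ := norm_add_le _ _
        _ ≤ ‖w y (V x)‖ + ‖w y‖ * ‖y - V x‖ :=
            add_le_add le_rfl ((w y).le_opNorm _)
        _ ≤ ‖w y (V x)‖ + 1 * (ε/3) :=
            add_le_add le_rfl (mul_le_mul (hw1 y) h4 (norm_nonneg _) zero_le_one)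
        _ = ‖w y (V x)‖ + ε/3 := by ring
    have h3 : ‖w y (V x)‖ ≤ ∑ z ∈ hs_fin.toFinset, ‖w z (V x)‖ :=
      Finset.single_le_sum (f := fun z => ‖w z (V x)‖) (fun z _ => norm_nonneg _)
        (hs_fin.mem_toFinset.mpr hyS)
    linarith
  intro x
  rcases eq_or_ne x 0 with rfl | hx0
  · simp only [map_zero, norm_zero]
    positivity
  · have hn : (0:ℝ) < ‖x‖ := norm_pos_iff.mpr hx0
    set u : X := ((‖x‖:ℂ))⁻¹ • x with hu
    have hnu : ‖u‖ ≤ 1 := by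
      rw [hu, norm_smul]
      simp [norm_inv, Complex.norm_real, abs_of_pos hn, inv_mul_cancel₀ hn.ne']
    have hxu : V x = (‖x‖:ℂ) • V u := by
      rw [hu, V.map_smul, smul_smul, mul_inv_cancel₀ (by exact_mod_cast hn.ne'), one_smul]
    have := key u hnu
    calc ‖V x‖ = ‖x‖ * ‖V u‖ := by
          rw [hxu, norm_smul, Complex.norm_real, norm_norm]
      _ ≤ ‖x‖ * ((∑ y ∈ hs_fin.toFinset, ‖w y (V u)‖) + 2 * (ε/3)) := by
          apply mul_le_mul_of_nonneg_left this hn.le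
      _ = (∑ y ∈ hs_fin.toFinset, ‖x‖ * ‖w y (V u)‖) + ‖x‖ * (2 * (ε/3)) := by
          rw [mul_add, Finset.mul_sum]
      _ ≤ (∑ y ∈ hs_fin.toFinset, ‖w y (V x)‖) + ε * ‖x‖ := by
          apply add_le_add
          · apply Finset.sum_le_sum
            intro y hy
            rw [hxu, (w y).map_smul, norm_smul, Complex.norm_real, norm_norm]
          · nlinarith [hn.le, hε.le]

lemma intgr_comp {X Y : Type*} [NormedAddCommGroup X] [NormedSpace ℂ X] [CompleteSpace X]
    [NormedAddCommGroup Y] [NormedSpace ℂ Y] [CompleteSpace Y]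
    (V : X →L[ℂ] Y) (ξ : Lp X 2 circleMeas) :
    Integrable (fun t => ‖V (ξ t)‖^2) circleMeas :=
  (integrable_norm_sq (V.compLp ξ)).congr
    (by filter_upwards [V.coeFn_compLp ξ] with t ht; rw [ht])

lemma eq_comp {X Y : Type*} [NormedAddCommGroup X] [NormedSpace ℂ X] [CompleteSpace X]
    [NormedAddCommGroup Y] [NormedSpace ℂ Y] [CompleteSpace Y]
    (V : X →L[ℂ] Y) (ξ : Lp X 2 circleMeas) :
    ∫ t, ‖V (ξ t)‖^2 ∂circleMeas = ∫ t, ‖(V.compLp ξ) t‖^2 ∂circleMeas :=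
  integral_congr_ae (by filter_upwards [V.coeFn_compLp ξ] with t ht; rw [ht])

lemma int_V_le {X Y : Type*} [NormedAddCommGroup X] [NormedSpace ℂ X] [CompleteSpace X]
    [NormedAddCommGroup Y] [NormedSpace ℂ Y] [CompleteSpace Y]
    (V : X →L[ℂ] Y) (ξ : Lp X 2 circleMeas) :
    ∫ t, ‖V (ξ t)‖^2 ∂circleMeas ≤ ‖V‖^2 * ‖ξ‖^2 := by
  have h1 : ∫ t, ‖V (ξ t)‖^2 ∂circleMeas ≤ ∫ t, ‖V‖^2 * ‖ξ t‖^2 ∂circleMeas := by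
    apply integral_mono_ae (intgr_comp V ξ) ((integrable_norm_sq ξ).const_mul _)
    filter_upwards with t
    have h := V.le_opNorm (ξ t)
    nlinarith [norm_nonneg (V (ξ t)), norm_nonneg (ξ t), norm_nonneg V]
  rwa [MeasureTheory.integral_const_mul, integral_norm_sq_eq] at h1

lemma sqrt_add_le' (x y : ℝ) : Real.sqrt (x + y) ≤ Real.sqrt x + Real.sqrt y := by
  rcases le_or_gt x 0 with hx | hx
  · rcases le_or_gt (x + y) 0 with hxy | hxy
    · rw [Real.sqrt_eq_zero_of_nonpos hxy]; positivity
    · have : x + y ≤ y := by linarith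
      calc Real.sqrt (x + y) ≤ Real.sqrt y := Real.sqrt_le_sqrt this
        _ ≤ Real.sqrt x + Real.sqrt y := le_add_of_nonneg_left (Real.sqrt_nonneg x)
  · rcases le_or_gt y 0 with hy | hy
    · have : x + y ≤ x := by linarith
      calc Real.sqrt (x + y) ≤ Real.sqrt x := Real.sqrt_le_sqrt this
        _ ≤ Real.sqrt x + Real.sqrt y := le_add_of_nonneg_right (Real.sqrt_nonneg y)
    · have h2 : Real.sqrt x + Real.sqrt y = Real.sqrt ((Real.sqrt x + Real.sqrt y)^2) :=
        (Real.sqrt_sq (by positivity)).symm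
      rw [h2]
      apply Real.sqrt_le_sqrt
      nlinarith [Real.sq_sqrt hx.le, Real.sq_sqrt hy.le, Real.sqrt_nonneg x, Real.sqrt_nonneg y]

set_option maxHeartbeats 2000000 in
lemma key_bound {X Y : Type*} [NormedAddCommGroup X] [NormedSpace ℂ X] [CompleteSpace X]
    [NormedAddCommGroup Y] [NormedSpace ℂ Y] [CompleteSpace Y]
    (R : Lp X 2 circleMeas →L[ℂ] Lp X 2 circleMeas)
    (hR : ∀ (φ : Lp X 2 circleMeas) (k : ℤ),
      fourierCoefL2 (R φ) k = if 0 ≤ k then fourierCoefL2 φ k else 0)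
    (V : X →L[ℂ] Y) (hV : IsCompactOperator V) {ε : ℝ} (hε : 0 < ε) :
    ∃ Cc : ℝ, 0 ≤ Cc ∧ ∀ φ : Lp X 2 circleMeas, ‖φ‖ ≤ 2 →
      Real.sqrt (∫ t, ‖V (φ t) - V (R φ t)‖^2 ∂circleMeas) ≤
        Cc * Real.sqrt (∫ t, ‖V (φ t)‖^2 ∂circleMeas) + ε := by
  classical
  set Cp : ℝ := 2 + 2 * ‖R‖ with hCp
  have hCp0 : 0 < Cp := by have := norm_nonneg R; rw [hCp]; linarith
  set ε' : ℝ := ε / (2 * (Cp + 1)) with hε'def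
  have hε' : 0 < ε' := by rw [hε'def]; positivity
  obtain ⟨C, w, hw1, hb⟩ := compact_dual_bound V hV hε'
  set m : ℝ := (C.card : ℝ) with hm
  have hm0 : 0 ≤ m := by rw [hm]; positivity
  refine ⟨Real.sqrt 2 * m, by positivity, ?_⟩
  intro φ hφ
  set D : Lp X 2 circleMeas := φ - R φ with hD
  have hDb : ‖D‖ ≤ Cp := by
    calc ‖D‖ ≤ ‖φ‖ + ‖R φ‖ := norm_sub_le _ _
      _ ≤ 2 + ‖R‖ * ‖φ‖ := add_le_add hφ (R.le_opNorm φ)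
      _ ≤ 2 + ‖R‖ * 2 := by
          have := mul_le_mul_of_nonneg_left hφ (norm_nonneg R)
          linarith
      _ = Cp := by rw [hCp]; ring
  have hDae : ∀ᵐ t ∂circleMeas, D t = φ t - R φ t := by
    filter_upwards [Lp.coeFn_sub φ (R φ)] with t ht
    rw [hD]  -- D is defeq
    rw [ht, Pi.sub_apply]
  set F : Y → Lp ℂ 2 circleMeas := fun y =>
    ((w y).comp V).compLp φ - ((w y).comp V).compLp (R φ) with hF
  have hFae : ∀ y, ∀ᵐ t ∂circleMeas, (F y) t = w y (V (φ t) - V (R φ t)) := by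
    intro y
    filter_upwards [Lp.coeFn_sub (((w y).comp V).compLp φ) (((w y).comp V).compLp (R φ)),
      ((w y).comp V).coeFn_compLp φ, ((w y).comp V).coeFn_compLp (R φ)] with t h1 h2 h3
    rw [hF]
    simp only []
    rw [h1, Pi.sub_apply, h2, h3, ContinuousLinearMap.comp_apply,
      ContinuousLinearMap.comp_apply, ← map_sub]
  have hFae' : ∀ᵐ t ∂circleMeas, ∀ y ∈ C, (F y) t = w y (V (φ t) - V (R φ t)) := by
    rw [Filter.eventually_all_finset]
    intro y _
    exact hFae y
  -- pointwise bound
  have hpt : ∀ᵐ t ∂circleMeas, ‖V (φ t) - V (R φ t)‖^2 ≤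
      2*m*(∑ y ∈ C, ‖(F y) t‖^2) + 2*ε'^2*‖D t‖^2 := by
    filter_upwards [hDae, hFae'] with t h1 h2
    have hx := hb (φ t - R φ t)
    rw [map_sub] at hx
    have hcheb : (∑ y ∈ C, ‖w y (V (φ t) - V (R φ t))‖)^2 ≤
        m * ∑ y ∈ C, ‖w y (V (φ t) - V (R φ t))‖^2 := by
      have := sq_sum_le_card_mul_sum_sq
        (s := C) (f := fun y => ‖w y (V (φ t) - V (R φ t))‖)
      exact_mod_cast this
    have hsum_eq : ∑ y ∈ C, ‖(F y) t‖^2 = ∑ y ∈ C, ‖w y (V (φ t) - V (R φ t))‖^2 :=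
      Finset.sum_congr rfl fun y hy => by rw [h2 y hy]
    rw [h1, hsum_eq]
    have hs0 : 0 ≤ ∑ y ∈ C, ‖w y (V (φ t) - V (R φ t))‖ :=
      Finset.sum_nonneg fun y _ => norm_nonneg _
    set a := ∑ y ∈ C, ‖w y (V (φ t) - V (R φ t))‖ with ha
    set q := ‖φ t - R φ t‖ with hq
    have hq0 : 0 ≤ q := norm_nonneg _
    have hsq : ‖V (φ t) - V (R φ t)‖^2 ≤ (a + ε' * q)^2 :=
      pow_le_pow_left₀ (norm_nonneg _) hx 2
    have h2ab : (a + ε' * q)^2 ≤ 2*a^2 + 2*(ε' * q)^2 := by nlinarith [sq_nonneg (a - ε' * q)]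
    have hfin : 2*a^2 ≤ 2*m*(∑ y ∈ C, ‖w y (V (φ t) - V (R φ t))‖^2) := by
      rw [ha]; linarith [hcheb]
    have : 2*(ε' * q)^2 = 2*ε'^2*q^2 := by ring
    linarith
  -- integrability
  have hTint : Integrable (fun t => ‖V (φ t) - V (R φ t)‖^2) circleMeas := by
    apply (integrable_norm_sq (V.compLp φ - V.compLp (R φ))).congr
    filter_upwards [Lp.coeFn_sub (V.compLp φ) (V.compLp (R φ)), V.coeFn_compLp φ,
      V.coeFn_compLp (R φ)] with t h1 h2 h3
    rw [h1, Pi.sub_apply, h2, h3]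
  have hRint : Integrable (fun t =>
      2*m*(∑ y ∈ C, ‖(F y) t‖^2) + 2*ε'^2*‖D t‖^2) circleMeas := by
    apply Integrable.add
    · exact (integrable_finset_sum C fun y _ => integrable_norm_sq (F y)).const_mul _
    · exact (integrable_norm_sq D).const_mul _
  have hint_le := integral_mono_ae hTint hRint hpt
  rw [integral_add ((integrable_finset_sum C fun y _ =>
      integrable_norm_sq (F y)).const_mul _) ((integrable_norm_sq D).const_mul _),
    MeasureTheory.integral_const_mul, MeasureTheory.integral_const_mul,
    integral_finset_sum C (fun y _ => integrable_norm_sq (F y)),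
    integral_norm_sq_eq D] at hint_le
  -- bound each Fourier piece
  set I : ℝ := ∫ t, ‖V (φ t)‖^2 ∂circleMeas with hI
  have hI0 : 0 ≤ I := by
    rw [hI]; apply integral_nonneg; intro t; positivity
  have hFy : ∀ y ∈ C, ∫ t, ‖(F y) t‖^2 ∂circleMeas ≤ I := by
    intro y _
    have h5 := riesz_scalar R hR ((w y).comp V) φ
    have h6 : ∫ t, ‖(((w y).comp V).compLp φ) t‖^2 ∂circleMeas ≤ I := by
      rw [hI]
      apply integral_mono_ae (integrable_norm_sq (((w y).comp V).compLp φ)) (intgr_comp V φ)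
      filter_upwards [((w y).comp V).coeFn_compLp φ] with t ht
      rw [ht, ContinuousLinearMap.comp_apply]
      have h7 : ‖w y (V (φ t))‖ ≤ ‖V (φ t)‖ := by
        calc ‖w y (V (φ t))‖ ≤ ‖w y‖ * ‖V (φ t)‖ := (w y).le_opNorm _
          _ ≤ 1 * ‖V (φ t)‖ := mul_le_mul_of_nonneg_right (hw1 y) (norm_nonneg _)
          _ = ‖V (φ t)‖ := one_mul _
      nlinarith [norm_nonneg (w y (V (φ t))), norm_nonneg (V (φ t))]
    exact le_trans h5 h6
  have hsumFy : ∑ y ∈ C, ∫ t, ‖(F y) t‖^2 ∂circleMeas ≤ m * I := by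
    calc ∑ y ∈ C, ∫ t, ‖(F y) t‖^2 ∂circleMeas ≤ ∑ _y ∈ C, I := Finset.sum_le_sum hFy
      _ = m * I := by rw [Finset.sum_const, hm, nsmul_eq_mul]
  have htot : ∫ t, ‖V (φ t) - V (R φ t)‖^2 ∂circleMeas ≤
      (Real.sqrt 2 * m)^2 * I + (Real.sqrt 2 * ε' * Cp)^2 := by
    have e1 : (Real.sqrt 2 * m)^2 * I = 2 * m * (m * I) := by
      rw [mul_pow, Real.sq_sqrt (by norm_num : (0:ℝ) ≤ 2)]; ring
    have e2 : (Real.sqrt 2 * ε' * Cp)^2 = 2 * ε'^2 * Cp^2 := by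
      rw [mul_pow, mul_pow, Real.sq_sqrt (by norm_num : (0:ℝ) ≤ 2)]
      try ring
    rw [e1, e2]
    have h8 : 2*m*(∑ y ∈ C, ∫ t, ‖(F y) t‖^2 ∂circleMeas) ≤ 2*m*(m*I) :=
      mul_le_mul_of_nonneg_left hsumFy (mul_nonneg (by norm_num) hm0)
    have h9 : 2*ε'^2*‖D‖^2 ≤ 2*ε'^2*Cp^2 :=
      mul_le_mul_of_nonneg_left (pow_le_pow_left₀ (norm_nonneg D) hDb 2)
        (mul_nonneg (by norm_num) (sq_nonneg ε'))
    linarith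
  -- take square roots
  calc Real.sqrt (∫ t, ‖V (φ t) - V (R φ t)‖^2 ∂circleMeas)
      ≤ Real.sqrt ((Real.sqrt 2 * m)^2 * I + (Real.sqrt 2 * ε' * Cp)^2) :=
        Real.sqrt_le_sqrt htot
    _ ≤ Real.sqrt ((Real.sqrt 2 * m)^2 * I) + Real.sqrt ((Real.sqrt 2 * ε' * Cp)^2) :=
        sqrt_add_le' _ _
    _ = (Real.sqrt 2 * m) * Real.sqrt I + Real.sqrt 2 * ε' * Cp := by
        rw [Real.sqrt_mul (sq_nonneg _),
          Real.sqrt_sq (mul_nonneg (Real.sqrt_nonneg 2) hm0),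
          Real.sqrt_sq (mul_nonneg (mul_nonneg (Real.sqrt_nonneg 2) hε'.le) hCp0.le)]
    _ ≤ (Real.sqrt 2 * m) * Real.sqrt I + ε := by
        have hs2 : Real.sqrt 2 ≤ 2 := by
          nlinarith [Real.sq_sqrt (by norm_num : (0:ℝ) ≤ 2), Real.sqrt_nonneg 2]
        have hfin : Real.sqrt 2 * ε' * Cp ≤ ε := by
          rw [hε'def]
          have hden : (0:ℝ) < 2*(Cp+1) := by linarith
          have heq : Real.sqrt 2 * (ε / (2*(Cp+1))) * Cp
              = ε * ((Real.sqrt 2 * Cp) / (2*(Cp+1))) := by ring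
          rw [heq]
          have h2 : (Real.sqrt 2 * Cp) / (2*(Cp+1)) ≤ 1 := by
            rw [div_le_one hden]
            nlinarith [hs2, hCp0.le]
          exact mul_le_of_le_one_right hε.le h2
        linarith

theorem stmt7 {X Y : Type*} [NormedAddCommGroup X] [NormedSpace ℂ X] [CompleteSpace X]
    [NormedAddCommGroup Y] [NormedSpace ℂ Y] [CompleteSpace Y]
    (R : Lp X 2 circleMeas →L[ℂ] Lp X 2 circleMeas)
    (hR : ∀ (φ : Lp X 2 circleMeas) (k : ℤ),
      fourierCoefL2 (R φ) k = if 0 ≤ k then fourierCoefL2 φ k else 0)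
    (V : X →L[ℂ] Y) (hV : IsCompactOperator V) :
    ∃ η : ℝ → ℝ, η 0 = 0 ∧ (∀ s : ℝ, 0 ≤ η s) ∧
      Tendsto η (nhdsWithin 0 (Set.Ici 0)) (𝓝 0) ∧
      ∀ φ : Lp X 2 circleMeas, ‖φ‖ ≤ 2 →
        Real.sqrt (∫ t, ‖V (φ t) - V (R φ t)‖ ^ 2 ∂circleMeas) ≤
          η (Real.sqrt (∫ t, ‖V (φ t)‖ ^ 2 ∂circleMeas)) := by
  classical
  set B : ℝ := ‖V‖ * (2 + 2*‖R‖) with hB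
  have hB0 : 0 ≤ B := mul_nonneg (norm_nonneg V) (by linarith [norm_nonneg R])
  -- global bound on the left-hand quantity
  have hTb : ∀ φ : Lp X 2 circleMeas, ‖φ‖ ≤ 2 →
      Real.sqrt (∫ t, ‖V (φ t) - V (R φ t)‖ ^ 2 ∂circleMeas) ≤ B := by
    intro φ hφ
    have h1 : ∫ t, ‖V (φ t) - V (R φ t)‖^2 ∂circleMeas
        = ∫ t, ‖V ((φ - R φ) t)‖^2 ∂circleMeas := by
      apply integral_congr_ae
      filter_upwards [Lp.coeFn_sub φ (R φ)] with t ht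
      rw [ht, Pi.sub_apply, map_sub]
    have h2 := int_V_le V (φ - R φ)
    have h3 : ‖φ - R φ‖ ≤ 2 + 2*‖R‖ := by
      calc ‖φ - R φ‖ ≤ ‖φ‖ + ‖R φ‖ := norm_sub_le _ _
        _ ≤ 2 + ‖R‖ * ‖φ‖ := add_le_add hφ (R.le_opNorm φ)
        _ ≤ 2 + ‖R‖ * 2 := by
            have := mul_le_mul_of_nonneg_left hφ (norm_nonneg R)
            linarith
        _ = 2 + 2*‖R‖ := by ring
    have h4 : ∫ t, ‖V (φ t) - V (R φ t)‖^2 ∂circleMeas ≤ B^2 := by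
      rw [h1]
      calc ∫ t, ‖V ((φ - R φ) t)‖^2 ∂circleMeas ≤ ‖V‖^2 * ‖φ - R φ‖^2 := h2
        _ ≤ B^2 := by
            rw [hB, mul_pow]
            exact mul_le_mul_of_nonneg_left
              (pow_le_pow_left₀ (norm_nonneg _) h3 2) (sq_nonneg ‖V‖)
    calc Real.sqrt (∫ t, ‖V (φ t) - V (R φ t)‖^2 ∂circleMeas)
        ≤ Real.sqrt (B^2) := Real.sqrt_le_sqrt h4
      _ = B := Real.sqrt_sq hB0
  set A : ℝ → Set ℝ := fun s => {r | ∃ φ : Lp X 2 circleMeas, ‖φ‖ ≤ 2 ∧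
    Real.sqrt (∫ t, ‖V (φ t)‖ ^ 2 ∂circleMeas) ≤ s ∧
    r = Real.sqrt (∫ t, ‖V (φ t) - V (R φ t)‖ ^ 2 ∂circleMeas)} with hA
  set η : ℝ → ℝ := fun s => sSup (A s) with hη
  have hbdd : ∀ s, BddAbove (A s) := by
    intro s
    refine ⟨B, ?_⟩
    rintro r ⟨φ, hφ, _, rfl⟩
    exact hTb φ hφ
  have hηnn : ∀ s, 0 ≤ η s := by
    intro s
    apply Real.sSup_nonneg
    rintro r ⟨φ, hφ, hS, rfl⟩
    exact Real.sqrt_nonneg _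
  have hkey : ∀ ε : ℝ, 0 < ε → ∃ Cc : ℝ, 0 ≤ Cc ∧ ∀ s : ℝ, 0 ≤ s → η s ≤ Cc * s + ε := by
    intro ε hε
    obtain ⟨Cc, hCc0, hCc⟩ := key_bound R hR V hV hε
    refine ⟨Cc, hCc0, ?_⟩
    intro s hs
    apply Real.sSup_le
    · rintro r ⟨φ, hφ, hS, rfl⟩
      calc Real.sqrt (∫ t, ‖V (φ t) - V (R φ t)‖ ^ 2 ∂circleMeas)
          ≤ Cc * Real.sqrt (∫ t, ‖V (φ t)‖ ^ 2 ∂circleMeas) + ε := hCc φ hφ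
        _ ≤ Cc * s + ε := by nlinarith [mul_le_mul_of_nonneg_left hS hCc0]
    · nlinarith [mul_nonneg hCc0 hs]
  refine ⟨η, ?_, hηnn, ?_, ?_⟩
  · -- η 0 = 0
    have h0 : η 0 ≤ 0 := by
      apply le_of_forall_pos_le_add
      intro ε hε
      obtain ⟨Cc, hCc0, hCc⟩ := hkey ε hε
      have := hCc 0 le_rfl
      simpa using this
    exact le_antisymm h0 (hηnn 0)
  · -- tendsto
    rw [Metric.tendsto_nhdsWithin_nhds]
    intro ε hε
    obtain ⟨Cc, hCc0, hCc⟩ := hkey (ε/4) (by linarith)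
    refine ⟨(ε/4)/(Cc+1), by positivity, ?_⟩
    intro s hs hd
    rw [Real.dist_eq, sub_zero] at hd ⊢
    have hs0 : (0:ℝ) ≤ s := hs
    have habs : s < (ε/4)/(Cc+1) := by rwa [abs_of_nonneg hs0] at hd
    have h1 : η s ≤ Cc * s + ε/4 := hCc s hs0
    have h2 : Cc * s ≤ ε/4 := by
      have hstep : Cc * s ≤ Cc * ((ε/4)/(Cc+1)) := mul_le_mul_of_nonneg_left habs.le hCc0
      have heq : Cc * ((ε/4)/(Cc+1)) = (ε/4) * (Cc/(Cc+1)) := by ring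
      have hq : Cc/(Cc+1) ≤ 1 := by
        rw [div_le_one (by linarith)]
        linarith
      have h2' : (ε/4) * (Cc/(Cc+1)) ≤ ε/4 :=
        mul_le_of_le_one_right (by linarith) hq
      calc Cc * s ≤ Cc * ((ε/4)/(Cc+1)) := hstep
        _ = (ε/4) * (Cc/(Cc+1)) := heq
        _ ≤ ε/4 := h2'
    rw [abs_of_nonneg (hηnn s)]
    linarith
  · -- main inequality
    intro φ hφ
    apply le_csSup (hbdd _)
    exact ⟨φ, hφ, le_rfl, rfl⟩
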